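/- For two positive semidefinite matrices Σ₁, Σ₂ ∈ R^{t×t}, the operator norm of the difference of their square roots satisfies ‖Σ₁^{1/2} - Σ₂^{1/2}‖_op ≤ t·‖Σ₁ - Σ₂‖_op^{1/2}. -/

import Mathlib

open Matrix

/-- Spectral (operator) norm of a real square matrix, acting on Euclidean space. -/
noncomputable def opNorm {n : ℕ} (M : Matrix (Fin n) (Fin n) ℝ) : ℝ :=
  ‖Matrix.toEuclideanCLM (𝕜 := ℝ) M‖

open scoped ComplexOrder in
/-- The positive semidefinite square root of a positive semidefinite matrix
(the definition `Matrix.PosSemidef.sqrt` of the older Mathlib, since removed). -/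
noncomputable def Matrix.PosSemidef.sqrt {n 𝕜 : Type*} [Fintype n] [RCLike 𝕜] [DecidableEq n]
    {A : Matrix n n 𝕜} (hA : A.PosSemidef) : Matrix n n 𝕜 :=
  hA.1.eigenvectorUnitary.1 * diagonal ((↑) ∘ (√·) ∘ hA.1.eigenvalues) *
  (star hA.1.eigenvectorUnitary : Matrix n n 𝕜)

lemma Matrix.PosSemidef.posSemidef_sqrt {t : ℕ} {A : Matrix (Fin t) (Fin t) ℝ}
    (hA : A.PosSemidef) : PosSemidef hA.sqrt := by
  apply PosSemidef.mul_mul_conjTranspose_same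
  refine posSemidef_diagonal_iff.mpr fun i ↦ ?_
  simp only [Function.comp_apply, RCLike.ofReal_real_eq_id, id]
  exact Real.sqrt_nonneg _

lemma Matrix.PosSemidef.sqrt_mul_self {t : ℕ} {A : Matrix (Fin t) (Fin t) ℝ}
    (hA : A.PosSemidef) : hA.sqrt * hA.sqrt = A := by
  let C : Matrix (Fin t) (Fin t) ℝ := hA.1.eigenvectorUnitary
  let E := diagonal ((↑) ∘ Real.sqrt ∘ hA.1.eigenvalues : Fin t → ℝ)
  suffices C * (E * (star C * C) * E) * star C = A by
    rw [Matrix.PosSemidef.sqrt]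
    change (C * E * star C) * (C * E * star C) = A
    simpa only [← mul_assoc] using this
  have : star C * C = 1 := Unitary.star_mul_self_of_mem hA.1.eigenvectorUnitary.prop
  rw [this, mul_one]
  change C * (E * E) * star C = A
  calc C * (E * E) * star C = C * diagonal (RCLike.ofReal ∘ hA.1.eigenvalues) * star C := by
        rw [diagonal_mul_diagonal]
        congr 2
        exact congrArg diagonal (funext fun i => Real.mul_self_sqrt (hA.eigenvalues_nonneg i))
    _ = A := hA.1.spectral_theorem.symm

open scoped Matrix.Norms.L2Operator RealInnerProductSpace

lemma opNorm_diagonal_le {t : ℕ} (d : Fin t → ℝ) (M : ℝ) (hM : 0 ≤ M)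
    (hd : ∀ i, |d i| ≤ M) : opNorm (Matrix.diagonal d) ≤ M := by
  refine ContinuousLinearMap.opNorm_le_bound _ hM ?_
  intro x
  have happ : ∀ i, (toEuclideanCLM (𝕜 := ℝ) (diagonal d) x) i = d i * x i := by
    intro i
    show (diagonal d *ᵥ (WithLp.equiv 2 _ x)) i = _
    simp [mulVec_diagonal]
  rw [EuclideanSpace.norm_eq, EuclideanSpace.norm_eq]
  rw [← Real.sqrt_sq hM, ← Real.sqrt_mul (by positivity)]
  apply Real.sqrt_le_sqrt
  rw [Finset.mul_sum]
  apply Finset.sum_le_sum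
  intro i _
  rw [happ i]
  have h1 := hd i
  rw [Real.norm_eq_abs, Real.norm_eq_abs, abs_mul]
  rw [mul_pow]
  exact mul_le_mul_of_nonneg_right (pow_le_pow_left₀ (abs_nonneg _) h1 2) (by positivity)

lemma isSelfAdjoint_toEuclideanCLM {t : ℕ} {D : Matrix (Fin t) (Fin t) ℝ}
    (hD : D.IsHermitian) : _root_.IsSelfAdjoint (toEuclideanCLM (𝕜 := ℝ) D) := by
  have hsD : star D = D := hD
  show star (toEuclideanCLM (𝕜 := ℝ) D) = toEuclideanCLM (𝕜 := ℝ) D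
  rw [← map_star, hsD]

/-- For positive semidefinite `S1, S2 ∈ ℝ^{t×t}`,
`‖S1^{1/2} - S2^{1/2}‖_op ≤ t ‖S1 - S2‖_op^{1/2}`. -/
theorem stmt_6 {t : ℕ} (S1 S2 : Matrix (Fin t) (Fin t) ℝ)
    (h₁ : S1.PosSemidef) (h₂ : S2.PosSemidef) :
    opNorm (h₁.sqrt - h₂.sqrt) ≤ (t : ℝ) * Real.sqrt (opNorm (S1 - S2)) := by
  rcases Nat.eq_zero_or_pos t with ht | ht
  · subst ht
    have h0 : opNorm (h₁.sqrt - h₂.sqrt) ≤ 0 := by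
      refine ContinuousLinearMap.opNorm_le_bound _ le_rfl ?_
      intro x
      have hx : x = 0 := Subsingleton.elim x 0
      simp [hx]
    refine le_trans h0 ?_
    positivity
  · have hne : Nonempty (Fin t) := ⟨⟨0, ht⟩⟩
    have hD : (h₁.sqrt - h₂.sqrt).IsHermitian :=
      (h₁.posSemidef_sqrt.isHermitian).sub (h₂.posSemidef_sqrt.isHermitian)
    set D := h₁.sqrt - h₂.sqrt with hDdef
    set c := opNorm (S1 - S2) with hcdef
    have hc : 0 ≤ c := norm_nonneg _
    obtain ⟨i₀, hi₀⟩ := Finite.exists_max (fun i => |hD.eigenvalues i|)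
    set lam := hD.eigenvalues i₀ with hlam
    set x := hD.eigenvectorBasis i₀ with hxdef
    have hx1 : ‖x‖ = 1 := hD.eigenvectorBasis.orthonormal.1 i₀
    -- step 1 : opNorm D ≤ |lam|
    have hdnorm : ‖diagonal hD.eigenvalues‖ ≤ |lam| :=
      opNorm_diagonal_le _ _ (abs_nonneg _) hi₀
    have step1 : opNorm D ≤ |lam| := by
      have hU : ‖(hD.eigenvectorUnitary : Matrix (Fin t) (Fin t) ℝ)‖ = 1 :=
        CStarRing.norm_coe_unitary hD.eigenvectorUnitary
      have hU' : ‖star (hD.eigenvectorUnitary : Matrix (Fin t) (Fin t) ℝ)‖ = 1 :=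
        CStarRing.norm_of_mem_unitary (Unitary.star_mem hD.eigenvectorUnitary.prop)
      have hspec := hD.spectral_theorem
      have h1 : opNorm D = ‖D‖ := rfl
      rw [h1, hspec]
      calc ‖(hD.eigenvectorUnitary : Matrix (Fin t) (Fin t) ℝ) * diagonal (RCLike.ofReal ∘ hD.eigenvalues)
              * star (hD.eigenvectorUnitary : Matrix (Fin t) (Fin t) ℝ)‖
          ≤ ‖(hD.eigenvectorUnitary : Matrix (Fin t) (Fin t) ℝ) * diagonal (RCLike.ofReal ∘ hD.eigenvalues)‖
              * ‖star (hD.eigenvectorUnitary : Matrix (Fin t) (Fin t) ℝ)‖ := norm_mul_le _ _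
        _ ≤ (‖(hD.eigenvectorUnitary : Matrix (Fin t) (Fin t) ℝ)‖ * ‖diagonal (RCLike.ofReal ∘ hD.eigenvalues)‖)
              * ‖star (hD.eigenvectorUnitary : Matrix (Fin t) (Fin t) ℝ)‖ :=
            mul_le_mul_of_nonneg_right (norm_mul_le _ _) (norm_nonneg _)
        _ = ‖diagonal hD.eigenvalues‖ := by
            have hid : diagonal (RCLike.ofReal ∘ hD.eigenvalues) = diagonal hD.eigenvalues := rfl
            rw [hU, hU', hid]; ring
        _ ≤ |lam| := hdnorm
    -- step 2 : lam ^ 2 ≤ c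
    set T := toEuclideanCLM (𝕜 := ℝ) D with hT
    set P := toEuclideanCLM (𝕜 := ℝ) h₁.sqrt with hP
    set Q := toEuclideanCLM (𝕜 := ℝ) h₂.sqrt with hQ
    have hTx : T x = lam • x := by
      apply (WithLp.equiv 2 _).injective
      have h := hD.mulVec_eigenvectorBasis i₀
      simpa [hT, ofLp_toEuclideanCLM] using h
    have hsaT : _root_.IsSelfAdjoint T := isSelfAdjoint_toEuclideanCLM hD
    have hadj : ∀ y z : EuclideanSpace ℝ (Fin t), ⟪T y, z⟫ = ⟪y, T z⟫ := by
      intro y z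
      nth_rewrite 1 [← hsaT.adjoint_eq]
      exact ContinuousLinearMap.adjoint_inner_left T z y
    set a := ⟪x, P x⟫ with ha'
    set b := ⟪x, Q x⟫ with hb'
    have hpsd : ∀ (M : Matrix (Fin t) (Fin t) ℝ), M.PosSemidef →
        0 ≤ ⟪x, toEuclideanCLM (𝕜 := ℝ) M x⟫ := by
      intro M hM
      have h := hM.dotProduct_mulVec_nonneg (WithLp.equiv 2 _ x)
      rw [EuclideanSpace.inner_eq_star_dotProduct]
      simpa [dotProduct_comm] using h
    have ha : 0 ≤ a := hpsd _ h₁.posSemidef_sqrt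
    have hb : 0 ≤ b := hpsd _ h₂.posSemidef_sqrt
    have hTPQ : T = P - Q := by rw [hT, hP, hQ, hDdef, map_sub]
    have hab : lam = a - b := by
      have h1 : ⟪x, T x⟫ = lam := by
        rw [hTx, real_inner_smul_right, real_inner_self_eq_norm_sq, hx1]
        ring
      rw [← h1, hTPQ, ContinuousLinearMap.sub_apply, inner_sub_right]
    have hR : toEuclideanCLM (𝕜 := ℝ) (S1 - S2) = P * T + T * Q := by
      rw [hTPQ, map_sub, ← h₁.sqrt_mul_self, ← h₂.sqrt_mul_self, _root_.map_mul,
        _root_.map_mul, ← hP, ← hQ, mul_sub, sub_mul]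
      abel
    have hkey : ⟪x, toEuclideanCLM (𝕜 := ℝ) (S1 - S2) x⟫ = lam * (a + b) := by
      rw [hR]
      simp only [ContinuousLinearMap.add_apply, ContinuousLinearMap.mul_apply, inner_add_right]
      rw [hTx, _root_.map_smul, inner_smul_right, ← hadj x (Q x), hTx, inner_smul_left]
      simp only [conj_trivial]
      ring
    have hbound : |⟪x, toEuclideanCLM (𝕜 := ℝ) (S1 - S2) x⟫| ≤ c := by
      calc |⟪x, toEuclideanCLM (𝕜 := ℝ) (S1 - S2) x⟫|
          ≤ ‖x‖ * ‖toEuclideanCLM (𝕜 := ℝ) (S1 - S2) x‖ := abs_real_inner_le_norm _ _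
        _ ≤ ‖x‖ * (‖toEuclideanCLM (𝕜 := ℝ) (S1 - S2)‖ * ‖x‖) := by
            gcongr
            exact ContinuousLinearMap.le_opNorm _ _
        _ = c := by rw [hx1, hcdef]; simp [opNorm]
    have habs : |lam| ≤ a + b := by
      rw [hab]
      exact abs_le.mpr ⟨by linarith, by linarith⟩
    have hsq : lam ^ 2 ≤ c := by
      have h1 : |lam| * |lam| ≤ |lam| * (a + b) :=
        mul_le_mul_of_nonneg_left habs (abs_nonneg _)
      have h2 : |lam| * (a + b) = |lam * (a + b)| := by
        rw [abs_mul, abs_of_nonneg (by linarith : (0:ℝ) ≤ a + b)]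
      rw [hkey] at hbound
      calc lam ^ 2 = |lam| * |lam| := by rw [← sq_abs, sq]
        _ ≤ |lam * (a + b)| := h2 ▸ h1
        _ ≤ c := hbound
    have hfin : |lam| ≤ Real.sqrt c := Real.abs_le_sqrt hsq
    calc opNorm D ≤ |lam| := step1
      _ ≤ Real.sqrt c := hfin
      _ ≤ (t : ℝ) * Real.sqrt c := by
          refine le_mul_of_one_le_left (Real.sqrt_nonneg _) ?_
          exact_mod_cast ht
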